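/- The Price of Anarchy of the two-sided facility location game with arbitrary feasible client behavior is at most 2: if (s, σ) is a subgame perfect equilibrium and OPT maximizes the weighted participation rate, then W(OPT) ≤ 2·W(s). -/

import Mathlib

open Finset

/-- Load of facility `j` under weight distribution `σ`. -/
def load {n k : ℕ} (σ : Fin n → Fin k → ℝ) (j : Fin k) : ℝ := ∑ i, σ i j

/-- A feasible client weight distribution: nonnegative, supported on accessible
facilities, and clients with a nonempty accessible set distribute their full weight. -/
def Feasible {n k : ℕ} (w : Fin n → ℝ) (N : Fin n → Finset (Fin k))
    (σ : Fin n → Fin k → ℝ) : Prop :=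
  (∀ i j, 0 ≤ σ i j) ∧
  (∀ i j, j ∉ N i → σ i j = 0) ∧
  (∀ i, (N i).Nonempty → ∑ j ∈ N i, σ i j = w i)

/-- Client equilibrium: no client puts positive weight on a facility while a
strictly less loaded accessible facility exists. -/
def ClientEq {n k : ℕ} (w : Fin n → ℝ) (N : Fin n → Finset (Fin k))
    (σ : Fin n → Fin k → ℝ) : Prop :=
  Feasible w N σ ∧
  ∀ i : Fin n, ∀ j ∈ N i, ∀ j' ∈ N i, 0 < σ i j → load σ j ≤ load σ j'

/-- Facilities accessible to client `i` under placement `s`. -/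
def NsF {n k : ℕ} (E : Fin n → Fin n → Bool) (s : Fin k → Fin n) (i : Fin n) :
    Finset (Fin k) :=
  Finset.univ.filter (fun j => s j = i ∨ E i (s j) = true)

/-- Weighted participation rate: total weight of clients covered by `s`. -/
def Wrate {n k : ℕ} (w : Fin n → ℕ) (E : Fin n → Fin n → Bool)
    (s : Fin k → Fin n) : ℕ :=
  ∑ i ∈ Finset.univ.filter (fun i => (NsF E s i).Nonempty), w i

/-- Price of Anarchy upper bound: for any (arbitrary) feasible client behavior
`σmap` and any subgame perfect equilibrium placement `s`, the optimal welfare is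
at most twice the equilibrium welfare. -/
lemma my_sum_biUnion_le {ι α : Type*} [DecidableEq α] (s : Finset ι) (f : ι → Finset α)
    (g : α → ℕ) : ∑ i ∈ s.biUnion f, g i ≤ ∑ p ∈ s, ∑ i ∈ f p, g i := by
  classical
  induction s using Finset.induction_on with
  | empty => simp
  | @insert a s ha ih =>
    rw [Finset.biUnion_insert, Finset.sum_insert ha]
    calc ∑ i ∈ f a ∪ s.biUnion f, g i
        ≤ (∑ i ∈ f a ∪ s.biUnion f, g i) + ∑ i ∈ f a ∩ s.biUnion f, g i := Nat.le_add_right _ _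
      _ = (∑ i ∈ f a, g i) + ∑ i ∈ s.biUnion f, g i := Finset.sum_union_inter
      _ ≤ (∑ i ∈ f a, g i) + ∑ p ∈ s, ∑ i ∈ f p, g i := Nat.add_le_add_left ih _

theorem poa_at_most_two (n k : ℕ)
    (w : Fin n → ℕ) (hw : ∀ i, 0 < w i) (E : Fin n → Fin n → Bool)
    (σmap : (Fin k → Fin n) → Fin n → Fin k → ℝ)
    (hfeas : ∀ s : Fin k → Fin n, Feasible (fun i => (w i : ℝ)) (NsF E s) (σmap s))
    (s : Fin k → Fin n)
    (hSPE : ∀ (p : Fin k) (v : Fin n),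
      load (σmap (Function.update s p v)) p ≤ load (σmap s) p) :
    ∀ t : Fin k → Fin n, Wrate w E t ≤ 2 * Wrate w E s := by
  intro t
  classical
  -- uncovered-by-s clients that facility position `t p` would cover
  set U : Fin k → Finset (Fin n) := fun p =>
    Finset.univ.filter (fun i => ¬ (NsF E s i).Nonempty ∧ (t p = i ∨ E i (t p) = true)) with hU
  -- Step 1: for each p, the relocated facility gets full weight from U p clients
  have hkey : ∀ p : Fin k, ∀ i ∈ U p,
      σmap (Function.update s p (t p)) i p = (w i : ℝ) := by
    intro p i hi
    simp only [hU, Finset.mem_filter, Finset.mem_univ, true_and] at hi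
    obtain ⟨hunc, hcov⟩ := hi
    set s' := Function.update s p (t p) with hs'
    have hN : NsF E s' i = {p} := by
      ext j
      simp only [NsF, Finset.mem_filter, Finset.mem_univ, true_and, Finset.mem_singleton]
      constructor
      · intro hj
        by_contra hne
        have : s' j = s j := Function.update_of_ne hne _ _
        rw [this] at hj
        exact hunc ⟨j, by simp [NsF, hj]⟩
      · intro hj; subst hj
        have : s' j = t j := Function.update_self _ _ _
        rw [this]; exact hcov
    obtain ⟨hpos, hsupp, hsum⟩ := hfeas s'
    have := hsum i (by rw [hN]; exact ⟨p, Finset.mem_singleton_self p⟩)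
    rw [hN, Finset.sum_singleton] at this
    exact this
  -- Step 2: U p sum bounded by load of p at equilibrium
  have hUp : ∀ p : Fin k, (∑ i ∈ U p, (w i : ℝ)) ≤ load (σmap s) p := by
    intro p
    have h1 : (∑ i ∈ U p, (w i : ℝ)) = ∑ i ∈ U p, σmap (Function.update s p (t p)) i p := by
      exact Finset.sum_congr rfl (fun i hi => (hkey p i hi).symm)
    have h2 : (∑ i ∈ U p, σmap (Function.update s p (t p)) i p) ≤
        load (σmap (Function.update s p (t p))) p := by
      apply Finset.sum_le_sum_of_subset_of_nonneg (Finset.subset_univ _)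
      intro i _ _
      exact (hfeas _).1 i p
    calc (∑ i ∈ U p, (w i : ℝ)) ≤ load (σmap (Function.update s p (t p))) p := by
          rw [h1]; exact h2
      _ ≤ load (σmap s) p := hSPE p (t p)
  -- Step 3: total equilibrium load equals equilibrium welfare
  have hload : (∑ p : Fin k, load (σmap s) p) = (Wrate w E s : ℝ) := by
    obtain ⟨hpos, hsupp, hsum⟩ := hfeas s
    simp only [load, Wrate, Nat.cast_sum]
    rw [Finset.sum_comm]
    rw [← Finset.sum_filter_add_sum_filter_not Finset.univ (fun i => (NsF E s i).Nonempty)]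
    have hzero : ∑ i ∈ Finset.univ.filter (fun i => ¬ (NsF E s i).Nonempty),
        (∑ p : Fin k, σmap s i p) = 0 := by
      apply Finset.sum_eq_zero
      intro i hi
      simp only [Finset.mem_filter, Finset.not_nonempty_iff_eq_empty] at hi
      apply Finset.sum_eq_zero
      intro p _
      exact hsupp i p (by rw [hi.2]; exact Finset.notMem_empty p)
    rw [hzero, add_zero]
    apply Finset.sum_congr rfl
    intro i hi
    simp only [Finset.mem_filter] at hi
    calc ∑ p : Fin k, σmap s i p
        = ∑ j ∈ NsF E s i, σmap s i j :=
          (Finset.sum_subset (Finset.subset_univ _) (fun x _ hx => hsupp i x hx)).symm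
      _ = (w i : ℝ) := hsum i hi.2
  -- Step 4: split the optimum's welfare
  have hsplit : (Wrate w E t : ℝ) ≤ (Wrate w E s : ℝ) +
      ∑ p : Fin k, ∑ i ∈ U p, (w i : ℝ) := by
    have hD : Wrate w E t ≤ Wrate w E s + ∑ p : Fin k, ∑ i ∈ U p, w i := by
      unfold Wrate
      rw [← Finset.sum_filter_add_sum_filter_not
        (Finset.univ.filter (fun i => (NsF E t i).Nonempty)) (fun i => (NsF E s i).Nonempty)]
      apply Nat.add_le_add
      · apply Finset.sum_le_sum_of_subset
        intro i hi
        simp only [Finset.mem_filter] at hi ⊢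
        exact ⟨hi.1.1, hi.2⟩
      · have hsub : (Finset.univ.filter (fun i => (NsF E t i).Nonempty)).filter
            (fun i => ¬ (NsF E s i).Nonempty) ⊆ Finset.univ.biUnion U := by
          intro i hi
          simp only [Finset.mem_filter, Finset.mem_univ, true_and] at hi
          obtain ⟨⟨p, hp⟩, hunc⟩ := hi
          simp only [NsF, Finset.mem_filter, Finset.mem_univ, true_and] at hp
          apply Finset.mem_biUnion.mpr
          refine ⟨p, Finset.mem_univ p, ?_⟩
          simp only [hU, Finset.mem_filter, Finset.mem_univ, true_and]
          exact ⟨hunc, hp⟩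
        calc ∑ i ∈ (Finset.univ.filter (fun i => (NsF E t i).Nonempty)).filter
              (fun i => ¬ (NsF E s i).Nonempty), w i
            ≤ ∑ i ∈ Finset.univ.biUnion U, w i := Finset.sum_le_sum_of_subset hsub
          _ ≤ ∑ p : Fin k, ∑ i ∈ U p, w i := my_sum_biUnion_le _ _ _
    calc (Wrate w E t : ℝ) ≤ ((Wrate w E s + ∑ p : Fin k, ∑ i ∈ U p, w i : ℕ) : ℝ) := by
          exact_mod_cast hD
      _ = (Wrate w E s : ℝ) + ∑ p : Fin k, ∑ i ∈ U p, (w i : ℝ) := by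
          push_cast; ring
  have hfinal : (Wrate w E t : ℝ) ≤ 2 * (Wrate w E s : ℝ) := by
    calc (Wrate w E t : ℝ) ≤ (Wrate w E s : ℝ) + ∑ p : Fin k, ∑ i ∈ U p, (w i : ℝ) := hsplit
      _ ≤ (Wrate w E s : ℝ) + ∑ p : Fin k, load (σmap s) p :=
          add_le_add_right (Finset.sum_le_sum (fun p _ => hUp p)) _
      _ = (Wrate w E s : ℝ) + (Wrate w E s : ℝ) := by rw [hload]
      _ = 2 * (Wrate w E s : ℝ) := by ring
  exact_mod_cast hfinal
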